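/- Let p be an odd prime, q = p^k, and suppose f : GF(q) → GF(q) is a planar function. For each r ∈ GF(q), define the orthonormal basis B_r of C^q consisting of the vectors v^{(r)}_c, c ∈ GF(q), whose ℓ-th coordinate is (1/√q)·ω^{Tr(cℓ + r·f(ℓ))} (ℓ ∈ GF(q)), where ω = e^{2πi/p} and Tr is the absolute trace of GF(q) over GF(p). Then together with the standard basis, the bases {B_r : r ∈ GF(q)} form a complete set of q+1 mutually unbiased bases of C^q. -/

import Mathlib

open Complex Finset

namespace PlanarMUBAux

variable (p : ℕ) [hp : Fact p.Prime] (F : Type*) [Field F] [Fintype F] [Algebra (ZMod p) F]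

noncomputable def ψ (x : F) : ℂ :=
  Complex.exp (2 * Real.pi * Complex.I *
    ((Algebra.trace (ZMod p) F x).val : ℂ) / (p : ℂ))

variable {F}

lemma psi_eq (x : F) :
    ψ p F x = Complex.exp (2 * Real.pi * Complex.I / p) ^ (Algebra.trace (ZMod p) F x).val := by
  rw [ψ, ← Complex.exp_nat_mul]
  congr 1
  ring

lemma zeta_pow_p : Complex.exp (2 * Real.pi * Complex.I / p) ^ p = 1 :=
  (Complex.isPrimitiveRoot_exp p hp.out.ne_zero).pow_eq_one

lemma psi_add (x y : F) : ψ p F (x + y) = ψ p F x * ψ p F y := by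
  rw [psi_eq, psi_eq, psi_eq, map_add, ZMod.val_add, ← pow_add]
  conv_rhs => rw [← Nat.div_add_mod ((Algebra.trace (ZMod p) F x).val +
    (Algebra.trace (ZMod p) F y).val) p, pow_add, pow_mul, zeta_pow_p, one_pow, one_mul]

lemma psi_zero : ψ p F 0 = 1 := by
  rw [psi_eq]; simp

lemma norm_psi (x : F) : ‖ψ p F x‖ = 1 := by
  rw [psi_eq, norm_pow]
  have h : (2 * (Real.pi:ℂ) * Complex.I / p) = ((2 * Real.pi / p : ℝ) : ℂ) * Complex.I := by
    push_cast; ring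
  rw [h, Complex.norm_exp_ofReal_mul_I, one_pow]

lemma conj_psi (x : F) : (starRingEnd ℂ) (ψ p F x) = ψ p F (-x) := by
  have h1 : ψ p F x * ψ p F (-x) = 1 := by
    rw [← psi_add]; simp [psi_zero]
  rw [← Complex.inv_eq_conj (norm_psi p x), inv_eq_of_mul_eq_one_right h1]

lemma psi_ne_one {x : F} (h : Algebra.trace (ZMod p) F x ≠ 0) : ψ p F x ≠ 1 := by
  rw [psi_eq]
  exact (Complex.isPrimitiveRoot_exp p hp.out.ne_zero).pow_ne_one_of_pos_of_lt
    (ZMod.val_pos.mpr h).ne' (ZMod.val_lt _)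

lemma exists_trace_ne : ∃ b : F, Algebra.trace (ZMod p) F b ≠ 0 := by
  have htr := traceForm_nondegenerate (ZMod p) F
  by_contra! hf
  have : (1 : F) = 0 := htr.1 1 (by intro n; simp [Algebra.traceForm_apply, hf])
  simp at this

lemma sum_psi : ∑ x : F, ψ p F x = 0 := by
  obtain ⟨b, hb⟩ := exists_trace_ne p (F := F)
  have hshift : ψ p F b * ∑ x : F, ψ p F x = ∑ x : F, ψ p F x := by
    rw [Finset.mul_sum]
    calc ∑ x : F, ψ p F b * ψ p F x = ∑ x : F, ψ p F (b + x) := by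
          simp [psi_add]
      _ = ∑ x : F, ψ p F x :=
          Fintype.sum_equiv (Equiv.addLeft b) _ _ (fun x => rfl)
  have := sub_eq_zero.mpr hshift
  rw [← sub_one_mul] at this
  rcases mul_eq_zero.mp this with h | h
  · exact absurd (by linear_combination h) (psi_ne_one p hb)
  · exact h

lemma sum_psi_mul {a : F} (ha : a ≠ 0) : ∑ x : F, ψ p F (a * x) = 0 := by
  rw [Fintype.sum_equiv (Equiv.mulLeft₀ a ha) (fun x => ψ p F (a * x)) (ψ p F)
    (fun x => rfl)]
  exact sum_psi p

end PlanarMUBAux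

open PlanarMUBAux in
theorem planar_function_gives_complete_mub
    (p : ℕ) (hp : p.Prime) (hodd : p ≠ 2)
    (F : Type*) [Field F] [Fintype F] [DecidableEq F] [Algebra (ZMod p) F]
    (f : F → F)
    (hplanar : ∀ a : F, a ≠ 0 → ∀ b : F, ∃! x : F, f (x + a) - f x = b) :
    (let q : ℕ := Fintype.card F
     let v : F → F → EuclideanSpace ℂ F := fun r c =>
       WithLp.toLp 2 (fun ℓ => (1 / Real.sqrt q : ℂ) *
         Complex.exp (2 * Real.pi * Complex.I *
           ((Algebra.trace (ZMod p) F (c * ℓ + r * f ℓ)).val : ℂ) / (p : ℂ)))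
     -- each B_r is an orthonormal basis,
     (∀ r, Orthonormal ℂ (v r)) ∧
     -- the bases B_r are pairwise mutually unbiased,
     (∀ r r', r ≠ r' → ∀ c c',
        ‖(inner ℂ (v r c) (v r' c') : ℂ)‖ = 1 / Real.sqrt q) ∧
     -- and each B_r is mutually unbiased with the standard basis
     (∀ r c ℓ, ‖(inner ℂ (EuclideanSpace.single ℓ (1 : ℂ)) (v r c) : ℂ)‖ =
        1 / Real.sqrt q)) := by
  haveI : Fact p.Prime := ⟨hp⟩
  intro q v
  have hq0 : 0 < q := Fintype.card_pos
  have hqR : (0:ℝ) < q := by exact_mod_cast hq0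
  have hqC : ((Real.sqrt q : ℝ) : ℂ) * ((Real.sqrt q : ℝ) : ℂ) = (q : ℂ) := by
    rw [← Complex.ofReal_mul, Real.mul_self_sqrt (le_of_lt hqR)]
    norm_cast
  have hsqR : (0:ℝ) < Real.sqrt q := Real.sqrt_pos.mpr hqR
  have hsq_ne : Real.sqrt q ≠ 0 := ne_of_gt hsqR
  have hqC_ne : (q : ℂ) ≠ 0 := by exact_mod_cast hq0.ne'
  have hv : ∀ r c ℓ, v r c ℓ = (1 / (Real.sqrt q : ℂ)) * ψ p F (c * ℓ + r * f ℓ) :=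
    fun _ _ _ => rfl
  have key : ∀ r c r' c' : F, (inner ℂ (v r c) (v r' c') : ℂ) =
      (q : ℂ)⁻¹ * ∑ ℓ : F, ψ p F ((c' - c) * ℓ + (r' - r) * f ℓ) := by
    intro r c r' c'
    rw [PiLp.inner_apply, Finset.mul_sum]
    refine Finset.sum_congr rfl fun ℓ _ => ?_
    rw [RCLike.inner_apply, hv, hv, map_mul, conj_psi]
    have harg : ψ p F (-(c * ℓ + r * f ℓ)) * ψ p F (c' * ℓ + r' * f ℓ)
        = ψ p F ((c' - c) * ℓ + (r' - r) * f ℓ) := by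
      rw [← psi_add]; congr 1; ring
    have hconj : (starRingEnd ℂ) (1 / ((Real.sqrt q : ℝ) : ℂ)) = 1 / ((Real.sqrt q : ℝ):ℂ) := by
      simp [Complex.conj_ofReal]
    rw [hconj, ← harg]
    set A := ψ p F (-(c * ℓ + r * f ℓ))
    set B := ψ p F (c' * ℓ + r' * f ℓ)
    calc (1 / ((Real.sqrt q : ℝ):ℂ) * B) * (1 / ((Real.sqrt q : ℝ):ℂ) * A)
        = (A * B) / (((Real.sqrt q : ℝ):ℂ) * ((Real.sqrt q : ℝ):ℂ)) := by ring
      _ = (A * B) / (q : ℂ) := by rw [hqC]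
      _ = (q : ℂ)⁻¹ * (A * B) := by rw [div_eq_mul_inv, mul_comm]
  refine ⟨?_, ?_, ?_⟩
  · -- orthonormality
    intro r
    rw [orthonormal_iff_ite]
    intro c c'
    rw [key]
    by_cases h : c = c'
    · subst h
      simp only [sub_self, zero_mul, add_zero, zero_add, psi_zero, if_pos rfl]
      rw [Finset.sum_const, Finset.card_univ]
      simp [hqC_ne]
      exact inv_mul_cancel₀ hqC_ne
    · rw [if_neg h]
      have h1 : ∀ ℓ : F, ψ p F ((c' - c) * ℓ + (r - r) * f ℓ) = ψ p F ((c' - c) * ℓ) := by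
        intro ℓ; congr 1; ring
      simp only [h1]
      rw [sum_psi_mul p (sub_ne_zero.mpr (Ne.symm h)), mul_zero]
  · -- mutual unbiasedness among the B_r
    intro r r' hrr c c'
    rw [key]
    set d := c' - c with hd
    set a := r' - r with ha
    have ha0 : a ≠ 0 := sub_ne_zero.mpr (Ne.symm hrr)
    set S := ∑ ℓ : F, ψ p F (d * ℓ + a * f ℓ) with hS
    have hSS : (starRingEnd ℂ) S * S = (q : ℂ) := by
      rw [hS, map_sum, Finset.sum_mul_sum]
      have step1 : ∀ ℓ : F,
          ∑ ℓ' : F, (starRingEnd ℂ) (ψ p F (d * ℓ + a * f ℓ)) * ψ p F (d * ℓ' + a * f ℓ')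
          = ∑ u : F, ψ p F (d * u) * ψ p F (a * (f (ℓ + u) - f ℓ)) := by
        intro ℓ
        refine (Fintype.sum_equiv (Equiv.addLeft ℓ)
          (fun u => ψ p F (d * u) * ψ p F (a * (f (ℓ + u) - f ℓ)))
          (fun ℓ' => (starRingEnd ℂ) (ψ p F (d * ℓ + a * f ℓ)) * ψ p F (d * ℓ' + a * f ℓ'))
          (fun u => ?_)).symm
        show ψ p F (d * u) * ψ p F (a * (f (ℓ + u) - f ℓ))
          = (starRingEnd ℂ) (ψ p F (d * ℓ + a * f ℓ)) * ψ p F (d * (ℓ + u) + a * f (ℓ + u))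
        rw [conj_psi, ← psi_add, ← psi_add]
        congr 1; ring
      simp only [step1]
      rw [Finset.sum_comm]
      have step2 : ∀ u : F, ∑ ℓ : F, ψ p F (d * u) * ψ p F (a * (f (ℓ + u) - f ℓ))
          = ψ p F (d * u) * ∑ ℓ : F, ψ p F (a * (f (ℓ + u) - f ℓ)) := by
        intro u; rw [Finset.mul_sum]
      simp only [step2]
      rw [Finset.sum_eq_single (0 : F)]
      · simp only [mul_zero, psi_zero, one_mul]
        have : ∀ ℓ : F, ψ p F (a * (f (ℓ + 0) - f ℓ)) = 1 := by
          intro ℓ; simp [psi_zero]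
        simp only [this]
        rw [Finset.sum_const, Finset.card_univ]
        simp
        rfl
      · intro u _ hu
        have hbij : Function.Bijective (fun ℓ : F => f (ℓ + u) - f ℓ) :=
          (Function.bijective_iff_existsUnique _).mpr (fun b => hplanar u hu b)
        have : ∑ ℓ : F, ψ p F (a * (f (ℓ + u) - f ℓ)) = ∑ y : F, ψ p F (a * y) :=
          hbij.sum_comp (fun y => ψ p F (a * y))
        rw [this, sum_psi_mul p ha0, mul_zero]
      · intro h; exact absurd (Finset.mem_univ 0) h
    have hnormSq : Complex.normSq S = (q : ℝ) := by
      have h1 : S * (starRingEnd ℂ) S = (q : ℂ) := by rw [mul_comm]; exact hSS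
      rw [Complex.mul_conj] at h1
      exact_mod_cast h1
    have hnS : ‖S‖ = Real.sqrt q := by
      rw [Complex.norm_def, hnormSq]
    rw [norm_mul, hnS, norm_inv, Complex.norm_natCast]
    rw [eq_div_iff hsq_ne, mul_assoc, Real.mul_self_sqrt (le_of_lt hqR)]
    field_simp
  · -- unbiasedness with the standard basis
    intro r c ℓ
    rw [EuclideanSpace.inner_single_left]
    simp only [map_one, one_mul]
    rw [hv, norm_mul, norm_psi]
    rw [norm_div, norm_one, mul_one, Complex.norm_real, Real.norm_eq_abs,
      _root_.abs_of_nonneg (Real.sqrt_nonneg _)]
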